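/- arXiv:1503.01740 — 4 statements merged into one kernel-verified Lean document; each statement's English description precedes it below -/
import Mathlib

section
/- The ring of D_k-invariant real polynomial functions on ℂ ≅ ℝ², where D_k is generated by z ↦ conj(z) and z ↦ e^{2πi/k}·conj(z), contains the polynomials δ₁(z) = |z|² and δ₂(z) = Re(z^k), and every element of this invariant ring is a polynomial in δ₁ and δ₂. -/
open Complex
open MvPolynomial


private lemma eval_aeval' {R : Type*} [CommSemiring R] {σ : Type*} (g : σ → MvPolynomial σ R)
    (v : σ → R) (C : MvPolynomial σ R) :
    eval v (aeval g C) = eval (fun i => eval v (g i)) C := by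
  induction C using MvPolynomial.induction_on with
  | C a => simp
  | add p q hp hq => rw [map_add, map_add, hp, hq, map_add]
  | mul_X p i hp => simp only [map_mul, hp, aeval_X, eval_X]

private lemma cheb : ∀ q : ℕ,
    ∃ C : MvPolynomial (Fin 2) ℝ, ∀ w : ℂ, (w ^ q).re = eval ![w.re, Complex.normSq w] C := by
  have key : ∀ q : ℕ,
      (∃ C : MvPolynomial (Fin 2) ℝ, ∀ w : ℂ, (w ^ q).re = eval ![w.re, Complex.normSq w] C) ∧
      (∃ C : MvPolynomial (Fin 2) ℝ, ∀ w : ℂ, (w ^ (q+1)).re = eval ![w.re, Complex.normSq w] C) := by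
    intro q
    induction q with
    | zero => exact ⟨⟨1, by simp⟩, ⟨X 0, by simp⟩⟩
    | succ n ih =>
      obtain ⟨⟨C1, h1⟩, ⟨C2, h2⟩⟩ := ih
      refine ⟨⟨C2, h2⟩, ⟨2 * X 0 * C2 - X 1 * C1, ?_⟩⟩
      intro w
      have key : (w ^ (n+1+1)).re = 2 * w.re * (w^(n+1)).re - Complex.normSq w * (w^n).re := by
        have h : w ^ (n+1+1) = w * (w * w ^ n) := by ring
        have h' : w ^ (n+1) = w * w ^ n := by ring
        rw [h, h', Complex.mul_re, Complex.mul_re, Complex.mul_im, Complex.normSq_apply]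
        ring
      rw [key, h1 w, h2 w]
      simp
  exact fun q => (key q).1

private lemma eval2_cast {σ : Type*} (vr : σ → ℝ) (P : MvPolynomial σ ℝ) :
    eval (fun i => ((vr i : ℝ) : ℂ)) (MvPolynomial.map (algebraMap ℝ ℂ) P)
      = ((eval vr P : ℝ) : ℂ) := by
  induction P using MvPolynomial.induction_on with
  | C a => simp
  | add p q hp hq => simp [hp, hq]
  | mul_X p i hp => simp [hp]

private lemma mono_re_le (k : ℕ) (d0 d1 : ℕ) (hle : d1 ≤ d0) (hd : k ∣ d0 - d1) :
    ∃ C : MvPolynomial (Fin 2) ℝ, ∀ z : ℂ,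
      (z ^ d0 * ((starRingEnd ℂ) z) ^ d1).re = eval ![Complex.normSq z, (z^k).re] C := by
  obtain ⟨q, hq⟩ := hd
  have hd0 : d0 = d1 + k * q := by omega
  obtain ⟨Cq, hCq⟩ := cheb q
  refine ⟨X 0 ^ d1 * aeval ![X 1, X 0 ^ k] Cq, ?_⟩
  intro z
  have h1 : z ^ d0 * ((starRingEnd ℂ) z) ^ d1 = ((Complex.normSq z : ℝ) : ℂ) ^ d1 * (z ^ k) ^ q := by
    rw [← Complex.mul_conj, hd0]
    rw [mul_pow, pow_add, pow_mul]
    ring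
  rw [h1]
  have h2 : ((((Complex.normSq z : ℝ) : ℂ)) ^ d1 * (z ^ k) ^ q).re
      = Complex.normSq z ^ d1 * ((z ^ k) ^ q).re := by
    rw [Complex.mul_re]
    simp [← Complex.ofReal_pow]
  rw [h2, hCq (z ^ k), map_mul, map_pow, eval_aeval']
  have h3 : (fun i => eval ![Complex.normSq z, (z^k).re] (![(X 1 : MvPolynomial (Fin 2) ℝ), X 0 ^ k] i))
      = ![(z^k).re, Complex.normSq z ^ k] := by
    funext i
    fin_cases i <;> simp
  rw [h3, map_pow]
  simp

private lemma mono_re (k : ℕ) (d0 d1 : ℕ) (hd : (k:ℤ) ∣ (d0:ℤ) - (d1:ℤ)) :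
    ∃ C : MvPolynomial (Fin 2) ℝ, ∀ z : ℂ,
      (z ^ d0 * ((starRingEnd ℂ) z) ^ d1).re = eval ![Complex.normSq z, (z^k).re] C := by
  rcases le_total d1 d0 with hle | hle
  · refine mono_re_le k d0 d1 hle ?_
    have : ((d0 - d1 : ℕ) : ℤ) = (d0:ℤ) - d1 := by omega
    exact_mod_cast this ▸ hd
  · obtain ⟨C, hC⟩ := mono_re_le k d1 d0 hle (by
      have : ((d1 - d0 : ℕ) : ℤ) = -((d0:ℤ) - d1) := by omega
      have h2 : (k:ℤ) ∣ ((d1 - d0 : ℕ) : ℤ) := this ▸ hd.neg_right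
      exact_mod_cast h2)
    refine ⟨C, fun z => ?_⟩
    have := hC ((starRingEnd ℂ) z)
    rw [Complex.conj_conj] at this
    rw [mul_comm, this, Complex.normSq_conj, ← map_pow, Complex.conj_re]

private lemma zeta_sum (k : ℕ) (ζ : ℂ) (hζ : IsPrimitiveRoot ζ k) (e : ℤ) :
    (∑ j ∈ Finset.range k, (ζ ^ e) ^ j) = if (k:ℤ) ∣ e then (k:ℂ) else 0 := by
  by_cases h : (k:ℤ) ∣ e
  · rw [if_pos h]
    have h1 : ζ ^ e = 1 := (hζ.zpow_eq_one_iff_dvd e).mpr h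
    simp [h1]
  · rw [if_neg h]
    have h1 : ζ ^ e ≠ 1 := fun hc => h ((hζ.zpow_eq_one_iff_dvd e).mp hc)
    have h2 : (ζ ^ e) ^ k = 1 := by
      rw [← zpow_natCast (ζ ^ e) k, ← zpow_mul, mul_comm, zpow_mul, zpow_natCast,
        hζ.pow_eq_one, one_zpow]
    rw [geom_sum_eq h1, h2]
    simp

private lemma zeta_basic (k : ℕ) (hk : 0 < k) :
    IsPrimitiveRoot (Complex.exp (2 * Real.pi * Complex.I / k)) k ∧
    (starRingEnd ℂ) (Complex.exp (2 * Real.pi * Complex.I / k))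
      = (Complex.exp (2 * Real.pi * Complex.I / k))⁻¹ ∧
    Complex.normSq (Complex.exp (2 * Real.pi * Complex.I / k)) = 1 := by
  set ζ := Complex.exp (2 * Real.pi * Complex.I / k) with hζdef
  have hprim : IsPrimitiveRoot ζ k := Complex.isPrimitiveRoot_exp k hk.ne'
  have habs : ‖ζ‖ = 1 := by
    have : (2 * Real.pi * Complex.I / k) = ((2 * Real.pi / k : ℝ) : ℂ) * Complex.I := by
      push_cast
      ring
    rw [hζdef, this, Complex.norm_exp_ofReal_mul_I]
  have hns : Complex.normSq ζ = 1 := by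
    rw [← Complex.sq_norm, habs]; norm_num
  have hconj : (starRingEnd ℂ) ζ = ζ⁻¹ := by
    have h1 : ζ * (starRingEnd ℂ) ζ = 1 := by rw [Complex.mul_conj]; exact_mod_cast hns
    exact eq_inv_of_mul_eq_one_left (by rw [mul_comm]; exact h1)
  exact ⟨hprim, hconj, hns⟩

private lemma rep (p : ℂ → ℝ) (P : MvPolynomial (Fin 2) ℝ)
    (hP : ∀ z : ℂ, p z = eval ![z.re, z.im] P) :
    ∃ (s : Finset (Fin 2 →₀ ℕ)) (c : (Fin 2 →₀ ℕ) → ℂ),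
      ∀ w : ℂ, ((p w : ℝ) : ℂ) = ∑ d ∈ s, c d * (w ^ d 0 * ((starRingEnd ℂ) w) ^ d 1) := by
  set g : Fin 2 → MvPolynomial (Fin 2) ℂ :=
    ![MvPolynomial.C (1/2 : ℂ) * (X 0 + X 1), MvPolynomial.C (Complex.I/2) * (X 1 - X 0)] with hg
  set Q : MvPolynomial (Fin 2) ℂ := aeval g (MvPolynomial.map (algebraMap ℝ ℂ) P) with hQ
  refine ⟨Q.support, fun d => Q.coeff d, fun w => ?_⟩
  have h1 : ((p w : ℝ) : ℂ) = eval ![w, (starRingEnd ℂ) w] Q := by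
    rw [hQ, eval_aeval']
    have h2 : (fun i => eval ![w, (starRingEnd ℂ) w] (g i))
        = (fun i => ((![w.re, w.im] i : ℝ) : ℂ)) := by
      funext i
      fin_cases i
      · show eval ![w, (starRingEnd ℂ) w] (MvPolynomial.C (1/2 : ℂ) * (X 0 + X 1)) = ((w.re : ℝ) : ℂ)
        simp only [map_mul, map_add, eval_C, eval_X, Matrix.cons_val_zero, Matrix.cons_val_one,
          Matrix.head_cons]
        rw [Complex.add_conj]
        push_cast
        ring
      · show eval ![w, (starRingEnd ℂ) w] (MvPolynomial.C (Complex.I/2) * (X 1 - X 0)) = ((w.im : ℝ) : ℂ)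
        simp only [map_mul, map_sub, eval_C, eval_X, Matrix.cons_val_zero, Matrix.cons_val_one,
          Matrix.head_cons]
        have him : (starRingEnd ℂ) w - w = -(((2 * w.im : ℝ) : ℂ) * Complex.I) := by
          rw [← Complex.sub_conj w]; ring
        rw [him]
        push_cast
        linear_combination (-(w.im : ℂ)) * Complex.I_mul_I
    rw [h2, eval2_cast, hP w]
  rw [h1, eval_eq']
  refine Finset.sum_congr rfl fun d _ => ?_
  congr 1
  rw [Fin.prod_univ_two]
  simp

private lemma twist (ζ z : ℂ) (hζ0 : ζ ≠ 0) (hconj : (starRingEnd ℂ) ζ = ζ⁻¹) (j d0 d1 : ℕ) :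
    (ζ^j * z)^d0 * ((starRingEnd ℂ) (ζ^j * z))^d1
      = (ζ ^ ((d0:ℤ) - (d1:ℤ)))^j * (z^d0 * ((starRingEnd ℂ) z)^d1) := by
  have h1 : ζ ^ ((d0:ℤ) - (d1:ℤ)) = ζ^d0 * (ζ⁻¹)^d1 := by
    rw [zpow_sub₀ hζ0, zpow_natCast, zpow_natCast, div_eq_mul_inv, inv_pow]
  rw [h1, map_mul, map_pow, hconj, mul_pow, mul_pow, mul_pow, ← pow_mul, ← pow_mul,
    ← pow_mul, ← pow_mul, Nat.mul_comm d0 j, Nat.mul_comm d1 j]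
  ring


/-- p : ℂ → ℝ is a real polynomial function on ℂ ≅ ℝ². -/
def IsRealPolyFun (p : ℂ → ℝ) : Prop :=
  ∃ P : MvPolynomial (Fin 2) ℝ, ∀ z : ℂ, p z = MvPolynomial.eval ![z.re, z.im] P

/-- p is invariant under the dihedral group D_k generated by z ↦ conj z and
z ↦ e^{2πi/k}·conj z. -/
def IsDihedralInvariant (k : ℕ) (p : ℂ → ℝ) : Prop :=
  (∀ z : ℂ, p ((starRingEnd ℂ) z) = p z) ∧
  (∀ z : ℂ, p (Complex.exp (2 * Real.pi * Complex.I / k) * (starRingEnd ℂ) z) = p z)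

/-- The ring of D_k-invariant real polynomial functions on ℂ contains δ₁(z) = |z|² and
δ₂(z) = Re(z^k), and every invariant polynomial function is a polynomial in δ₁, δ₂. -/
theorem dihedral_invariant_polynomials (k : ℕ) (hk : 0 < k) :
    (IsRealPolyFun (fun z => Complex.normSq z) ∧
      IsDihedralInvariant k (fun z => Complex.normSq z)) ∧
    (IsRealPolyFun (fun z => (z ^ k).re) ∧
      IsDihedralInvariant k (fun z => (z ^ k).re)) ∧
    (∀ p : ℂ → ℝ, IsRealPolyFun p → IsDihedralInvariant k p →
      ∃ Q : MvPolynomial (Fin 2) ℝ,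
        ∀ z : ℂ, p z = MvPolynomial.eval ![Complex.normSq z, (z ^ k).re] Q) := by
  obtain ⟨hprim0, hconjζ0, hns0⟩ := zeta_basic k hk
  refine ⟨?_, ?_, ?_⟩
  · constructor
    · exact ⟨X 0 * X 0 + X 1 * X 1, fun z => by simp [Complex.normSq_apply]⟩
    · constructor
      · intro z; simp
      · intro z; simp [map_mul, hns0]
  · constructor
    · obtain ⟨Ck, hCk⟩ := cheb k
      refine ⟨aeval ![X 0, X 0 * X 0 + X 1 * X 1] Ck, fun z => ?_⟩
      show (z ^ k).re = _
      rw [hCk z, eval_aeval']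
      have : (fun i => eval ![z.re, z.im] (![(X 0 : MvPolynomial (Fin 2) ℝ), X 0 * X 0 + X 1 * X 1] i))
          = ![z.re, Complex.normSq z] := by
        funext i
        fin_cases i <;> simp [Complex.normSq_apply]
      rw [this]
    · constructor
      · intro z
        show (((starRingEnd ℂ) z) ^ k).re = (z ^ k).re
        rw [← map_pow, Complex.conj_re]
      · intro z
        show ((Complex.exp (2 * Real.pi * Complex.I / k) * (starRingEnd ℂ) z) ^ k).re = (z ^ k).re
        rw [mul_pow, hprim0.pow_eq_one, one_mul, ← map_pow, Complex.conj_re]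
  intro p hpoly hinv
  obtain ⟨P, hP⟩ := hpoly
  obtain ⟨s, c, hrep⟩ := rep p P hP
  obtain ⟨hprim, hconjζ, hns⟩ := zeta_basic k hk
  set ζ : ℂ := Complex.exp (2 * Real.pi * Complex.I / k) with hζdef
  obtain ⟨hc, hr⟩ := hinv
  have hζ0 : ζ ≠ 0 := Complex.exp_ne_zero _
  have hk0 : (k : ℂ) ≠ 0 := Nat.cast_ne_zero.mpr hk.ne'
  -- rotation invariance
  have hrot : ∀ z, p (ζ * z) = p z := by
    intro z
    have h1 := hr ((starRingEnd ℂ) z)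
    rw [Complex.conj_conj] at h1
    rw [h1, hc]
  have hrotj : ∀ j z, p (ζ ^ j * z) = p z := by
    intro j
    induction j with
    | zero => intro z; simp
    | succ n ih =>
      intro z
      have : ζ ^ (n + 1) * z = ζ ^ n * (ζ * z) := by ring
      rw [this, ih, hrot]
  -- the key complex identity
  have key : ∀ z : ℂ, (2 : ℂ) * ((p z : ℝ) : ℂ) * k
      = ∑ d ∈ s, (if (k:ℤ) ∣ ((d 0 : ℤ) - (d 1 : ℤ)) then (k:ℂ) else 0)
          * (c d * (z ^ d 0 * ((starRingEnd ℂ) z) ^ d 1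
              + ((starRingEnd ℂ) z) ^ d 0 * z ^ d 1)) := by
    intro z
    have lhs_eq : ∑ j ∈ Finset.range k,
        (((p (ζ^j * z) : ℝ) : ℂ) + ((p (ζ^j * (starRingEnd ℂ) z) : ℝ) : ℂ))
        = 2 * ((p z : ℝ) : ℂ) * k := by
      have hterm : ∀ j, (((p (ζ^j * z) : ℝ) : ℂ) + ((p (ζ^j * (starRingEnd ℂ) z) : ℝ) : ℂ))
          = 2 * ((p z : ℝ) : ℂ) := by
        intro j
        rw [hrotj j z, hrotj j ((starRingEnd ℂ) z), hc]
        ring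
      rw [Finset.sum_congr rfl fun j _ => hterm j, Finset.sum_const, Finset.card_range,
        nsmul_eq_mul]
      ring
    rw [← lhs_eq]
    have term_eq : ∀ j ∈ Finset.range k,
        (((p (ζ^j * z) : ℝ) : ℂ) + ((p (ζ^j * (starRingEnd ℂ) z) : ℝ) : ℂ))
        = ∑ d ∈ s, c d * ((ζ ^ ((d 0:ℤ) - (d 1:ℤ))) ^ j
            * (z ^ d 0 * ((starRingEnd ℂ) z) ^ d 1 + ((starRingEnd ℂ) z) ^ d 0 * z ^ d 1)) := by
      intro j _
      rw [hrep (ζ^j * z), hrep (ζ^j * (starRingEnd ℂ) z), ← Finset.sum_add_distrib]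
      refine Finset.sum_congr rfl fun d _ => ?_
      rw [twist ζ z hζ0 hconjζ j (d 0) (d 1), twist ζ ((starRingEnd ℂ) z) hζ0 hconjζ j (d 0) (d 1),
        Complex.conj_conj]
      ring
    rw [Finset.sum_congr rfl term_eq, Finset.sum_comm]
    refine Finset.sum_congr rfl fun d _ => ?_
    have : ∀ j, c d * ((ζ ^ ((d 0:ℤ) - (d 1:ℤ))) ^ j
            * (z ^ d 0 * ((starRingEnd ℂ) z) ^ d 1 + ((starRingEnd ℂ) z) ^ d 0 * z ^ d 1))
        = (ζ ^ ((d 0:ℤ) - (d 1:ℤ))) ^ j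
            * (c d * (z ^ d 0 * ((starRingEnd ℂ) z) ^ d 1 + ((starRingEnd ℂ) z) ^ d 0 * z ^ d 1)) := by
      intro j; ring
    rw [Finset.sum_congr rfl fun j _ => this j, ← Finset.sum_mul,
      zeta_sum k ζ hprim ((d 0:ℤ) - (d 1:ℤ))]
  -- cancel k and take real parts
  have key2 : ∀ z : ℂ, p z
      = ∑ d ∈ s, (if (k:ℤ) ∣ ((d 0 : ℤ) - (d 1 : ℤ)) then
          (c d).re * (z ^ d 0 * ((starRingEnd ℂ) z) ^ d 1).re else 0) := by
    intro z
    have h1 := key z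
    have h2 : (2 : ℂ) * ((p z : ℝ) : ℂ) * k = (k : ℂ) * ((2 : ℂ) * ((p z : ℝ) : ℂ)) := by ring
    have h3 : ∑ d ∈ s, (if (k:ℤ) ∣ ((d 0 : ℤ) - (d 1 : ℤ)) then (k:ℂ) else 0)
          * (c d * (z ^ d 0 * ((starRingEnd ℂ) z) ^ d 1 + ((starRingEnd ℂ) z) ^ d 0 * z ^ d 1))
        = (k:ℂ) * ∑ d ∈ s, (if (k:ℤ) ∣ ((d 0 : ℤ) - (d 1 : ℤ)) then
            (c d * (z ^ d 0 * ((starRingEnd ℂ) z) ^ d 1 + ((starRingEnd ℂ) z) ^ d 0 * z ^ d 1))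
            else 0) := by
      rw [Finset.mul_sum]
      refine Finset.sum_congr rfl fun d _ => ?_
      by_cases h : (k:ℤ) ∣ ((d 0 : ℤ) - (d 1 : ℤ))
      · rw [if_pos h, if_pos h]
      · rw [if_neg h, if_neg h, zero_mul, mul_zero]
    rw [h2, h3] at h1
    have h4 := mul_left_cancel₀ hk0 h1
    -- take real parts
    have h5 : (2 : ℝ) * p z = ((2 : ℂ) * ((p z : ℝ) : ℂ)).re := by simp
    have h6 : ((2 : ℂ) * ((p z : ℝ) : ℂ)).re
        = ∑ d ∈ s, (if (k:ℤ) ∣ ((d 0 : ℤ) - (d 1 : ℤ)) then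
            (c d * (z ^ d 0 * ((starRingEnd ℂ) z) ^ d 1 + ((starRingEnd ℂ) z) ^ d 0 * z ^ d 1))
            else 0).re := by
      rw [h4, Complex.re_sum]
    have h7 : ∀ d ∈ s, (if (k:ℤ) ∣ ((d 0 : ℤ) - (d 1 : ℤ)) then
            (c d * (z ^ d 0 * ((starRingEnd ℂ) z) ^ d 1 + ((starRingEnd ℂ) z) ^ d 0 * z ^ d 1))
            else 0).re
        = 2 * (if (k:ℤ) ∣ ((d 0 : ℤ) - (d 1 : ℤ)) then
            (c d).re * (z ^ d 0 * ((starRingEnd ℂ) z) ^ d 1).re else 0) := by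
      intro d _
      by_cases h : (k:ℤ) ∣ ((d 0 : ℤ) - (d 1 : ℤ))
      · rw [if_pos h, if_pos h]
        have hw : ((starRingEnd ℂ) z) ^ d 0 * z ^ d 1
            = (starRingEnd ℂ) (z ^ d 0 * ((starRingEnd ℂ) z) ^ d 1) := by
          rw [map_mul, map_pow, map_pow, Complex.conj_conj]
        rw [hw, Complex.add_conj, Complex.mul_re]
        simp only [Complex.ofReal_re, Complex.ofReal_im, mul_zero, sub_zero]
        ring
      · rw [if_neg h, if_neg h]
        simp
    have h8 : (2:ℝ) * p z = 2 * ∑ d ∈ s, (if (k:ℤ) ∣ ((d 0 : ℤ) - (d 1 : ℤ)) then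
            (c d).re * (z ^ d 0 * ((starRingEnd ℂ) z) ^ d 1).re else 0) := by
      rw [h5, h6, Finset.sum_congr rfl h7, ← Finset.mul_sum]
    exact mul_left_cancel₀ (two_ne_zero) h8
  -- build the final polynomial
  have hCd : ∀ d : Fin 2 →₀ ℕ, ∃ C : MvPolynomial (Fin 2) ℝ,
      ((k:ℤ) ∣ ((d 0 : ℤ) - (d 1 : ℤ))) →
        ∀ z : ℂ, (z ^ d 0 * ((starRingEnd ℂ) z) ^ d 1).re
          = eval ![Complex.normSq z, (z^k).re] C := by
    intro d
    by_cases h : (k:ℤ) ∣ ((d 0 : ℤ) - (d 1 : ℤ))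
    · obtain ⟨C, hC⟩ := mono_re k (d 0) (d 1) h
      exact ⟨C, fun _ => hC⟩
    · exact ⟨0, fun h' => absurd h' h⟩
  choose Cf hCf using hCd
  refine ⟨∑ d ∈ s, if (k:ℤ) ∣ ((d 0 : ℤ) - (d 1 : ℤ)) then
      MvPolynomial.C ((c d).re) * Cf d else 0, fun z => ?_⟩
  rw [map_sum, key2 z]
  refine Finset.sum_congr rfl fun d _ => ?_
  by_cases h : (k:ℤ) ∣ ((d 0 : ℤ) - (d 1 : ℤ))
  · rw [if_pos h, if_pos h, map_mul, eval_C, hCf d h z]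
  · rw [if_neg h, if_neg h, map_zero]
end

section
/- The map ℂ → ℝ³, z ↦ (Re(z^k), Im(z^k), |z|²), induces a bijection from the set of orbits of the rotation action of ℤ/k on ℂ onto the set C_k = {(s,t,u) ∈ ℝ³ : s² + t² = u^k, u ≥ 0}; that is, two complex numbers z, w have the same image if and only if w = e^{2πij/k}·z for some integer j. -/
open Complex

/-- The Hilbert map z ↦ (Re(z^k), Im(z^k), |z|²) separates the orbits of the rotation
action of ℤ/k on ℂ: two points have the same image iff they differ by a k-th root of
unity. -/
theorem hilbert_map_separates_orbits_cyclic (k : ℕ) (hk : 0 < k) (z w : ℂ) :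
    ((z ^ k).re, (z ^ k).im, Complex.normSq z) =
        ((w ^ k).re, (w ^ k).im, Complex.normSq w) ↔
      ∃ j : ℤ, w = Complex.exp (2 * Real.pi * Complex.I * j / k) * z := by
  constructor
  · rintro h
    simp only [Prod.mk.injEq] at h
    obtain ⟨h1, h2, h3⟩ := h
    have hpow : z ^ k = w ^ k := Complex.ext h1 h2
    by_cases hz : z = 0
    · refine ⟨0, ?_⟩
      have : w ^ k = 0 := by rw [← hpow, hz, zero_pow hk.ne']
      have hw : w = 0 := pow_eq_zero_iff hk.ne' |>.mp this
      simp [hz, hw]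
    · have : NeZero k := ⟨hk.ne'⟩
      have hprim := Complex.isPrimitiveRoot_exp k hk.ne'
      have hroot : (w / z) ^ k = 1 := by
        field_simp [hz]
        rw [div_pow, div_eq_one_iff_eq (pow_ne_zero _ hz)]; exact hpow.symm
      obtain ⟨i, _, hi⟩ := hprim.eq_pow_of_pow_eq_one hroot
      refine ⟨(i : ℤ), ?_⟩
      have : w / z = Complex.exp (2 * Real.pi * Complex.I * i / k) := by
        rw [← hi, ← Complex.exp_nat_mul]
        ring_nf
      rw [div_eq_iff hz] at this
      rw [this]
      push_cast
      ring_nf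
  · rintro ⟨j, rfl⟩
    have hk' : (k : ℂ) ≠ 0 := Nat.cast_ne_zero.mpr hk.ne'
    have hpow : Complex.exp (2 * Real.pi * Complex.I * j / k) ^ k = 1 := by
      rw [← Complex.exp_nat_mul]
      rw [show (k : ℂ) * (2 * Real.pi * Complex.I * j / k) = j * (2 * Real.pi * Complex.I) by
        field_simp]
      exact Complex.exp_int_mul_two_pi_mul_I j
    have habs : Complex.normSq (Complex.exp (2 * Real.pi * Complex.I * j / k)) = 1 := by
      rw [Complex.normSq_eq_norm_sq, Complex.norm_exp]
      have : (2 * Real.pi * Complex.I * j / k).re = 0 := by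
        simp [Complex.div_re, Complex.mul_re, Complex.mul_im]
      rw [this, Real.exp_zero, one_pow]
    rw [mul_pow, hpow, one_mul, Complex.normSq_mul, habs, one_mul]
end

section
/- The image of the map ℂ → ℝ² given by z ↦ (|z|², Re(z^k)) is exactly the set R_k = {(s,t) ∈ ℝ² : t² ≤ s^k, s ≥ 0}. -/
/-- The image of the Hilbert map z ↦ (|z|², Re(z^k)) for the dihedral action of D_k on ℂ
is exactly R_k = {(s,t) : t² ≤ s^k, s ≥ 0}. -/
theorem hilbert_map_image_dihedral (k : ℕ) (hk : 0 < k) :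
    Set.range (fun z : ℂ => (Complex.normSq z, (z ^ k).re)) =
      {p : ℝ × ℝ | p.2 ^ 2 ≤ p.1 ^ k ∧ 0 ≤ p.1} := by
  ext ⟨s, t⟩
  simp only [Set.mem_range, Set.mem_setOf_eq, Prod.mk.injEq]
  constructor
  · rintro ⟨z, hz1, hz2⟩
    subst hz1; subst hz2
    refine ⟨?_, Complex.normSq_nonneg z⟩
    have h1 : (z ^ k).re ^ 2 ≤ Complex.normSq (z ^ k) := by
      rw [Complex.normSq_apply]; nlinarith [sq_nonneg (z ^ k).im]
    simpa [map_pow] using h1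
  · rintro ⟨h1, h2⟩
    rcases eq_or_lt_of_le h2 with hs | hs
    · refine ⟨0, by simp [← hs], ?_⟩
      have hsk : s ^ k = 0 := by rw [← hs]; exact zero_pow hk.ne'
      have ht : t = 0 := by nlinarith [sq_nonneg t]
      simp [ht, zero_pow hk.ne']
    · set r := Real.sqrt s with hrdef
      have hrpos : 0 < r := Real.sqrt_pos.mpr hs
      have hrk : 0 < r ^ k := pow_pos hrpos k
      have hr2 : r ^ 2 = s := Real.sq_sqrt hs.le
      have hsk : s ^ k = (r ^ k) ^ 2 := by rw [← hr2]; ring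
      have htle : -(r ^ k) ≤ t ∧ t ≤ r ^ k := by
        constructor <;> nlinarith
      set c : ℝ := t / r ^ k with hcdef
      have hc1 : -1 ≤ c := by
        rw [hcdef, le_div_iff₀ hrk]; linarith [htle.1]
      have hc2 : c ≤ 1 := by
        rw [hcdef, div_le_one hrk]; exact htle.2
      set θ : ℝ := Real.arccos c with hθ
      refine ⟨(r : ℂ) * Complex.exp ((θ / k : ℝ) * Complex.I), ?_, ?_⟩
      · have : ‖(r : ℂ) * Complex.exp ((θ / k : ℝ) * Complex.I)‖ = r := by
          rw [norm_mul, Complex.norm_exp_ofReal_mul_I, mul_one, Complex.norm_real, Real.norm_eq_abs,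
            abs_of_pos hrpos]
        rw [Complex.normSq_eq_norm_sq, this, hr2]
      · have hkne : (k : ℝ) ≠ 0 := Nat.cast_ne_zero.mpr hk.ne'
        have hpow : ((r : ℂ) * Complex.exp ((θ / k : ℝ) * Complex.I)) ^ k
            = (r : ℂ) ^ k * Complex.exp ((θ : ℝ) * Complex.I) := by
          rw [mul_pow, ← Complex.exp_nat_mul]
          congr 2
          push_cast
          have : (k : ℂ) ≠ 0 := Nat.cast_ne_zero.mpr hk.ne'
          field_simp
        rw [hpow]
        have hcast : ((r : ℂ) ^ k) = ((r ^ k : ℝ) : ℂ) := by push_cast; ring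
        rw [hcast, Complex.re_ofReal_mul, Complex.exp_ofReal_mul_I_re, hθ,
          Real.cos_arccos hc1 hc2, hcdef]
        field_simp
end

section
/- Two complex numbers z, w satisfy (|z|², Re(z^k)) = (|w|², Re(w^k)) if and only if w lies in the D_k-orbit of z, where D_k is generated by z ↦ conj(z) and z ↦ e^{2πi/k}·conj(z). -/
open Complex

lemma exp_root_pow (k : ℕ) (hk : 0 < k) (j : ℤ) :
    (Complex.exp (2 * Real.pi * Complex.I * j / k)) ^ k = 1 := by
  rw [← Complex.exp_nat_mul]
  have hk' : (k : ℂ) ≠ 0 := Nat.cast_ne_zero.mpr hk.ne'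
  rw [show (k : ℂ) * (2 * Real.pi * Complex.I * j / k) = j * (2 * Real.pi * Complex.I) by
    field_simp]
  exact Complex.exp_int_mul_two_pi_mul_I j

lemma exp_root_abs (k : ℕ) (hk : 0 < k) (j : ℤ) :
    ‖Complex.exp (2 * Real.pi * Complex.I * j / k)‖ = 1 := by
  have h : ‖Complex.exp (2 * Real.pi * Complex.I * j / k)‖ ^ k = 1 := by
    rw [← norm_pow, exp_root_pow k hk j, norm_one]
  have h0 : (0:ℝ) ≤ ‖Complex.exp (2 * Real.pi * Complex.I * j / k)‖ :=
    norm_nonneg _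
  exact (pow_left_inj₀ h0 zero_le_one hk.ne').mp (by rw [h, one_pow])

lemma eq_root_mul (k : ℕ) (hk : 0 < k) (u w : ℂ) (h : w ^ k = u ^ k) :
    ∃ j : ℤ, w = Complex.exp (2 * Real.pi * Complex.I * j / k) * u := by
  rcases eq_or_ne u 0 with rfl | hu
  · refine ⟨0, ?_⟩
    have : w ^ k = 0 := by simpa using h.trans (zero_pow hk.ne')
    have hw : w = 0 := pow_eq_zero_iff hk.ne' |>.mp this
    simp [hw]
  · have hdiv : (w / u) ^ k = 1 := by
      rw [div_pow, h, div_self (pow_ne_zero _ hu)]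
    haveI : NeZero k := ⟨hk.ne'⟩
    obtain ⟨i, _, hi⟩ := (Complex.isPrimitiveRoot_exp k hk.ne').eq_pow_of_pow_eq_one hdiv
    refine ⟨i, ?_⟩
    have : Complex.exp (2 * Real.pi * Complex.I * (i:ℤ) / k) = w / u := by
      rw [← hi, ← Complex.exp_nat_mul]
      congr 1
      push_cast
      ring
    rw [this, div_mul_cancel₀ _ hu]

/-- The map z ↦ (|z|², Re(z^k)) separates the orbits of the dihedral group D_k
(generated by z ↦ conj z and z ↦ e^{2πi/k}·conj z) acting on ℂ: two points have the same
image iff one is obtained from the other by a rotation by a k-th root of unity, possibly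
composed with conjugation. -/
theorem hilbert_map_separates_orbits_dihedral (k : ℕ) (hk : 0 < k) (z w : ℂ) :
    (Complex.normSq z, (z ^ k).re) = (Complex.normSq w, (w ^ k).re) ↔
      ∃ j : ℤ, w = Complex.exp (2 * Real.pi * Complex.I * j / k) * z ∨
        w = Complex.exp (2 * Real.pi * Complex.I * j / k) * (starRingEnd ℂ) z := by
  constructor
  · intro h
    obtain ⟨h1, h2⟩ := Prod.mk.injEq _ _ _ _ ▸ h
    have hn : Complex.normSq (z ^ k) = Complex.normSq (w ^ k) := by
      rw [map_pow, map_pow, h1]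
    have him : (z ^ k).im ^ 2 = (w ^ k).im ^ 2 := by
      rw [Complex.normSq_apply, Complex.normSq_apply] at hn
      linear_combination hn - ((z ^ k).re + (w ^ k).re) * h2
    rcases sq_eq_sq_iff_eq_or_eq_neg.mp him with h3 | h3
    · have hzw : w ^ k = z ^ k := Complex.ext h2.symm h3.symm
      obtain ⟨j, hj⟩ := eq_root_mul k hk z w hzw
      exact ⟨j, Or.inl hj⟩
    · have hzw : w ^ k = ((starRingEnd ℂ) z) ^ k := by
        rw [← map_pow]
        refine Complex.ext ?_ ?_
        · rw [Complex.conj_re]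
          exact h2.symm
        · rw [Complex.conj_im]
          linarith
      obtain ⟨j, hj⟩ := eq_root_mul k hk _ w hzw
      exact ⟨j, Or.inr hj⟩
  · rintro ⟨j, hj | hj⟩ <;> subst hj <;> refine Prod.ext ?_ ?_
    · rw [Complex.normSq_mul, ← Complex.sq_norm (Complex.exp _), exp_root_abs k hk j]
      norm_num
    · rw [mul_pow, exp_root_pow k hk j, one_mul]
    · rw [Complex.normSq_mul, ← Complex.sq_norm (Complex.exp _), exp_root_abs k hk j,
        Complex.normSq_conj]
      norm_num
    · rw [mul_pow, exp_root_pow k hk j, one_mul, ← map_pow, Complex.conj_re]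
end
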